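/- (Discrete Schur estimate) Let H be a Hilbert space and (T_ℓ)_{ℓ∈ℕ} a sequence of bounded linear operators on H such that ‖T_j^* T_ℓ‖ ≤ 2^{−|j−ℓ|/2} for all j, ℓ. Then there exists a constant C (independent of the sequence) such that for every finitely supported sequence (v_ℓ) in H, ‖Σ_ℓ T_ℓ v_ℓ‖ ≤ C (Σ_ℓ ‖v_ℓ‖²)^{1/2}. -/

import Mathlib

theorem stmt_5 {H : Type*} [NormedAddCommGroup H] [InnerProductSpace ℂ H]
    [CompleteSpace H] :
    ∃ C > 0, ∀ T : ℕ → H →L[ℂ] H,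
      (∀ j ℓ : ℕ, ‖ContinuousLinearMap.adjoint (T j) ∘L T ℓ‖
          ≤ (2:ℝ) ^ (-|(j:ℝ) - (ℓ:ℝ)| / 2)) →
      ∀ (v : ℕ → H) (s : Finset ℕ),
        ‖∑ ℓ ∈ s, T ℓ (v ℓ)‖ ≤ C * Real.sqrt (∑ ℓ ∈ s, ‖v ℓ‖^2) := by
  set r : ℝ := (2:ℝ) ^ (-(1:ℝ)/2) with hrdef
  have hr0 : 0 < r := Real.rpow_pos_of_pos (by norm_num) _
  have hr1 : r < 1 := Real.rpow_lt_one_of_one_lt_of_neg (by norm_num) (by norm_num)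
  have hrsq : r ^ 2 = 1/2 := by
    rw [hrdef, ← Real.rpow_natCast ((2:ℝ) ^ (-(1:ℝ)/2)) 2, ← Real.rpow_mul (by norm_num)]
    norm_num
  have hr57 : r ≤ 5/7 := by nlinarith [hr0.le]
  have hgeom : ∀ n : ℕ, ∑ k ∈ Finset.range n, r ^ k ≤ (1 - r)⁻¹ := by
    intro n
    calc ∑ k ∈ Finset.range n, r ^ k ≤ ∑' k : ℕ, r ^ k :=
          Summable.sum_le_tsum _ (fun k _ => by positivity)
            (summable_geometric_of_lt_one hr0.le hr1)
      _ = (1 - r)⁻¹ := tsum_geometric_of_lt_one hr0.le hr1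
  have hinv : (1 - r)⁻¹ ≤ 7/2 := by
    have h2 : (2:ℝ)/7 ≤ 1 - r := by linarith
    calc (1 - r)⁻¹ ≤ ((2:ℝ)/7)⁻¹ := by
          apply inv_anti₀ (by norm_num) h2
      _ = 7/2 := by norm_num
  have hrow : ∀ (s : Finset ℕ) (ℓ : ℕ), ∑ j ∈ s, r ^ Nat.dist j ℓ ≤ 7 := by
    intro s ℓ
    set N := max (ℓ + 1) (s.sup id + 1) with hN
    have hsub : s ⊆ Finset.range N := by
      intro j hj
      exact Finset.mem_range.mpr (lt_of_le_of_lt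
        (Finset.le_sup (f := id) hj)
        (lt_of_lt_of_le (Nat.lt_succ_self _) (le_max_right _ _)))
    have hℓN : ℓ ≤ N := le_trans (Nat.le_succ _) (le_max_left _ _)
    have h1 : ∑ j ∈ s, r ^ Nat.dist j ℓ ≤ ∑ j ∈ Finset.range N, r ^ Nat.dist j ℓ :=
      Finset.sum_le_sum_of_subset_of_nonneg hsub (fun _ _ _ => by positivity)
    have hsplit : ∑ j ∈ Finset.range N, r ^ Nat.dist j ℓ
        = ∑ j ∈ Finset.range ℓ, r ^ Nat.dist j ℓ
          + ∑ j ∈ Finset.Ico ℓ N, r ^ Nat.dist j ℓ := by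
      rw [Finset.range_eq_Ico, ← Finset.sum_Ico_consecutive _ (Nat.zero_le ℓ) hℓN, Finset.range_eq_Ico]
    have e1 : ∑ j ∈ Finset.range ℓ, r ^ Nat.dist j ℓ ≤ (1 - r)⁻¹ := by
      have heq : ∑ j ∈ Finset.range ℓ, r ^ Nat.dist j ℓ
          = ∑ j ∈ Finset.range ℓ, r ^ (j + 1) := by
        rw [← Finset.sum_range_reflect (fun j => r ^ (j + 1)) ℓ]
        apply Finset.sum_congr rfl
        intro j hj
        have hjℓ := Finset.mem_range.mp hj
        rw [Nat.dist_eq_sub_of_le (le_of_lt hjℓ)]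
        congr 1
        omega
      rw [heq]
      calc ∑ j ∈ Finset.range ℓ, r ^ (j + 1)
          ≤ ∑ j ∈ Finset.range ℓ, r ^ j :=
            Finset.sum_le_sum (fun j _ =>
              pow_le_pow_of_le_one hr0.le hr1.le (Nat.le_succ j))
        _ ≤ (1 - r)⁻¹ := hgeom ℓ
    have e2 : ∑ j ∈ Finset.Ico ℓ N, r ^ Nat.dist j ℓ ≤ (1 - r)⁻¹ := by
      have heq : ∑ j ∈ Finset.Ico ℓ N, r ^ Nat.dist j ℓ
          = ∑ j ∈ Finset.range (N - ℓ), r ^ j := by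
        rw [Finset.sum_Ico_eq_sum_range]
        apply Finset.sum_congr rfl
        intro j _
        rw [Nat.dist_eq_sub_of_le_right (Nat.le_add_right ℓ j)]
        congr 1
        omega
      rw [heq]
      exact hgeom _
    calc ∑ j ∈ s, r ^ Nat.dist j ℓ
        ≤ ∑ j ∈ Finset.range N, r ^ Nat.dist j ℓ := h1
      _ = _ + _ := hsplit
      _ ≤ (1 - r)⁻¹ + (1 - r)⁻¹ := add_le_add e1 e2
      _ ≤ 7 := by linarith
  refine ⟨3, by norm_num, ?_⟩
  intro T hT v s
  have hT' : ∀ j ℓ : ℕ, ‖ContinuousLinearMap.adjoint (T j) ∘L T ℓ‖ ≤ r ^ Nat.dist j ℓ := by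
    intro j ℓ
    refine (hT j ℓ).trans_eq ?_
    have habs : |(j:ℝ) - (ℓ:ℝ)| = (Nat.dist j ℓ : ℝ) := by
      rcases le_total j ℓ with h | h
      · rw [Nat.dist_eq_sub_of_le h, abs_sub_comm,
          abs_of_nonneg (sub_nonneg.mpr (Nat.cast_le.mpr h))]
        push_cast [h]; ring
      · rw [Nat.dist_eq_sub_of_le_right h,
          abs_of_nonneg (sub_nonneg.mpr (Nat.cast_le.mpr h))]
        push_cast [h]; ring
    rw [habs, hrdef, ← Real.rpow_natCast ((2:ℝ) ^ (-(1:ℝ)/2)) (Nat.dist j ℓ),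
      ← Real.rpow_mul (by norm_num)]
    congr 1
    ring
  have key : ∀ j ℓ : ℕ, RCLike.re (inner ℂ (T j (v j)) (T ℓ (v ℓ)) : ℂ)
      ≤ r ^ Nat.dist j ℓ * (‖v j‖ * ‖v ℓ‖) := by
    intro j ℓ
    have h1 : (inner ℂ (T j (v j)) (T ℓ (v ℓ)) : ℂ)
        = inner ℂ (v j) ((ContinuousLinearMap.adjoint (T j) ∘L T ℓ) (v ℓ)) := by
      rw [ContinuousLinearMap.comp_apply, ContinuousLinearMap.adjoint_inner_right]
    have hw : (0:ℝ) ≤ r ^ Nat.dist j ℓ := by positivity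
    calc RCLike.re (inner ℂ (T j (v j)) (T ℓ (v ℓ)) : ℂ)
        ≤ ‖(inner ℂ (v j) ((ContinuousLinearMap.adjoint (T j) ∘L T ℓ) (v ℓ)) : ℂ)‖ := by
          rw [h1]; exact RCLike.re_le_norm _
      _ ≤ ‖v j‖ * ‖(ContinuousLinearMap.adjoint (T j) ∘L T ℓ) (v ℓ)‖ :=
          norm_inner_le_norm _ _
      _ ≤ ‖v j‖ * (‖ContinuousLinearMap.adjoint (T j) ∘L T ℓ‖ * ‖v ℓ‖) :=
          mul_le_mul_of_nonneg_left (ContinuousLinearMap.le_opNorm _ _) (norm_nonneg _)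
      _ ≤ ‖v j‖ * (r ^ Nat.dist j ℓ * ‖v ℓ‖) := by
          apply mul_le_mul_of_nonneg_left _ (norm_nonneg _)
          exact mul_le_mul_of_nonneg_right (hT' j ℓ) (norm_nonneg _)
      _ = r ^ Nat.dist j ℓ * (‖v j‖ * ‖v ℓ‖) := by ring
  have piece : ∀ w : ℕ → ℝ, (∀ j, 0 ≤ w j) →
      ∑ j ∈ s, ∑ ℓ ∈ s, r ^ Nat.dist j ℓ * w j ≤ 7 * ∑ j ∈ s, w j := by
    intro w hw
    rw [Finset.mul_sum]
    apply Finset.sum_le_sum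
    intro j _
    calc ∑ ℓ ∈ s, r ^ Nat.dist j ℓ * w j
        = (∑ ℓ ∈ s, r ^ Nat.dist ℓ j) * w j := by
          rw [Finset.sum_mul]
          exact Finset.sum_congr rfl (fun ℓ _ => by rw [Nat.dist_comm])
      _ ≤ 7 * w j := mul_le_mul_of_nonneg_right (hrow s j) (hw j)
  have hnorm2 : ‖∑ ℓ ∈ s, T ℓ (v ℓ)‖ ^ 2 ≤ 7 * ∑ ℓ ∈ s, ‖v ℓ‖ ^ 2 := by
    rw [← inner_self_eq_norm_sq (𝕜 := ℂ), sum_inner, map_sum]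
    calc ∑ j ∈ s, RCLike.re (inner ℂ (T j (v j)) (∑ ℓ ∈ s, T ℓ (v ℓ)) : ℂ)
        = ∑ j ∈ s, ∑ ℓ ∈ s, RCLike.re (inner ℂ (T j (v j)) (T ℓ (v ℓ)) : ℂ) := by
          refine Finset.sum_congr rfl (fun j _ => ?_)
          rw [inner_sum, map_sum]
      _ ≤ ∑ j ∈ s, ∑ ℓ ∈ s, r ^ Nat.dist j ℓ * (‖v j‖ * ‖v ℓ‖) :=
          Finset.sum_le_sum (fun j _ => Finset.sum_le_sum (fun ℓ _ => key j ℓ))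
      _ ≤ ∑ j ∈ s, ∑ ℓ ∈ s, (r ^ Nat.dist j ℓ * (‖v j‖^2/2)
            + r ^ Nat.dist j ℓ * (‖v ℓ‖^2/2)) := by
          refine Finset.sum_le_sum (fun j _ => Finset.sum_le_sum (fun ℓ _ => ?_))
          have h := sq_nonneg (‖v j‖ - ‖v ℓ‖)
          have hw : (0:ℝ) ≤ r ^ Nat.dist j ℓ := by positivity
          nlinarith
      _ = ∑ j ∈ s, ∑ ℓ ∈ s, r ^ Nat.dist j ℓ * (‖v j‖^2/2)
            + ∑ j ∈ s, ∑ ℓ ∈ s, r ^ Nat.dist j ℓ * (‖v ℓ‖^2/2) := by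
          rw [← Finset.sum_add_distrib]
          exact Finset.sum_congr rfl (fun j _ => Finset.sum_add_distrib)
      _ ≤ 7 * ∑ j ∈ s, ‖v j‖^2/2 + 7 * ∑ ℓ ∈ s, ‖v ℓ‖^2/2 := by
          apply add_le_add
          · exact piece (fun j => ‖v j‖^2/2) (fun j => by positivity)
          · rw [Finset.sum_comm]
            have hc : ∀ ℓ ∈ s, ∑ j ∈ s, r ^ Nat.dist j ℓ * (‖v ℓ‖^2/2)
                = ∑ j ∈ s, r ^ Nat.dist ℓ j * (‖v ℓ‖^2/2) :=
              fun ℓ _ => Finset.sum_congr rfl (fun j _ => by rw [Nat.dist_comm])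
            rw [Finset.sum_congr rfl hc]
            exact piece (fun ℓ => ‖v ℓ‖^2/2) (fun ℓ => by positivity)
      _ = 7 * ∑ ℓ ∈ s, ‖v ℓ‖^2 := by
          rw [← Finset.sum_div]
          ring
  have hA : (0:ℝ) ≤ ∑ ℓ ∈ s, ‖v ℓ‖^2 := by positivity
  have hsqrt9 : Real.sqrt 9 = 3 := by
    rw [show (9:ℝ) = 3^2 by norm_num, Real.sqrt_sq (by norm_num)]
  calc ‖∑ ℓ ∈ s, T ℓ (v ℓ)‖
      = Real.sqrt (‖∑ ℓ ∈ s, T ℓ (v ℓ)‖ ^ 2) := (Real.sqrt_sq (norm_nonneg _)).symm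
    _ ≤ Real.sqrt (9 * ∑ ℓ ∈ s, ‖v ℓ‖^2) := Real.sqrt_le_sqrt (by linarith)
    _ = Real.sqrt 9 * Real.sqrt (∑ ℓ ∈ s, ‖v ℓ‖^2) := Real.sqrt_mul (by norm_num) _
    _ = 3 * Real.sqrt (∑ ℓ ∈ s, ‖v ℓ‖^2) := by rw [hsqrt9]
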